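/- If B ∈ ℝ^{s×s} is symmetric with diagonal entries equal to 1 and B + c I is positive semidefinite for some c ≥ 1, then B can be written as B = E'F where the columns of E and F each have Euclidean norm at most 1 + c + √c. -/

import Mathlib

open Matrix

/-- If `B` is a symmetric `s×s` real matrix with unit diagonal and `B + c • I` is
positive semidefinite for some `c ≥ 1`, then `B = Eᵀ * F` where every column of `E`
and of `F` has Euclidean norm at most `1 + c + √c`. -/
theorem stmt_3 (s : ℕ) (B : Matrix (Fin s) (Fin s) ℝ) (c : ℝ)
    (hc : 1 ≤ c) (hsym : B.IsSymm) (hdiag : ∀ k, B k k = 1)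
    (hpsd : (B + c • (1 : Matrix (Fin s) (Fin s) ℝ)).PosSemidef) :
    ∃ E F : Matrix (Fin s) (Fin s) ℝ, B = Eᵀ * F ∧
      (∀ j, Real.sqrt (∑ i, (E i j) ^ 2) ≤ 1 + c + Real.sqrt c) ∧
      (∀ j, Real.sqrt (∑ i, (F i j) ^ 2) ≤ 1 + c + Real.sqrt c) := by
  have hc0 : (0:ℝ) ≤ c := le_trans zero_le_one hc
  open scoped MatrixOrder in set D := CFC.sqrt (B + c • (1 : Matrix (Fin s) (Fin s) ℝ)) with hDdef
  have hDpsd : D.PosSemidef := by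
    open scoped MatrixOrder in exact (CFC.sqrt_nonneg _).posSemidef
  have hDsym : Dᵀ = D := hDpsd.isHermitian
  have hDD : D * D = B + c • 1 := by
    open scoped MatrixOrder in exact CFC.sqrt_mul_sqrt_self _ hpsd.nonneg
  set a := Real.sqrt c with ha
  have ha2 : a * a = c := Real.mul_self_sqrt hc0
  have ha0 : 0 ≤ a := Real.sqrt_nonneg c
  refine ⟨D + a • 1, D - a • 1, ?_, ?_, ?_⟩
  · have : (D + a • 1)ᵀ = D + a • 1 := by
      rw [transpose_add, hDsym, transpose_smul, transpose_one]
    rw [this]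
    have : (D + a • 1) * (D - a • 1) = D * D - (a * a) • 1 := by
      rw [mul_sub, add_mul, Matrix.smul_mul, Matrix.mul_smul, one_mul, mul_one,
        smul_add, smul_smul]
      abel
    rw [this, hDD, ha2]
    simp
  all_goals {
    intro j
    -- column sum of squares of D
    have hcol : ∑ i, (D i j) ^ 2 = 1 + c := by
      have : (D * D) j j = ∑ i, (D i j) ^ 2 := by
        rw [mul_apply]
        refine Finset.sum_congr rfl fun i _ => ?_
        have h2 : D j i = D i j :=
          (Matrix.transpose_apply D i j).symm.trans (by rw [hDsym])
        rw [h2, sq]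
      rw [← this, hDD]
      simp [hdiag j, Matrix.one_apply]
    have hdnn : 0 ≤ D j j := by
      have := hDpsd.dotProduct_mulVec_nonneg (Pi.single j 1)
      simpa [Matrix.mulVec_single, dotProduct, Pi.single_apply] using hDpsd.dotProduct_mulVec_nonneg (Pi.single j 1)
    have hdub : D j j ≤ Real.sqrt (1 + c) := by
      have h1 : (D j j)^2 ≤ ∑ i, (D i j)^2 := by
        have := Finset.single_le_sum (f := fun i => (D i j)^2)
          (fun i _ => sq_nonneg _) (Finset.mem_univ j)
        simpa using this
      rw [hcol] at h1
      nlinarith [Real.sq_sqrt (by linarith : (0:ℝ) ≤ 1 + c), Real.sqrt_nonneg (1+c)]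
    have hsamesum : ∀ (b : ℝ), ∑ i, ((D + b • (1 : Matrix (Fin s) (Fin s) ℝ)) i j)^2
        = 1 + c + 2 * b * D j j + b^2 := by
      intro b
      have : ∀ i, ((D + b • (1 : Matrix (Fin s) (Fin s) ℝ)) i j)^2
          = (D i j)^2 + (if i = j then 2 * b * D j j + b^2 else 0) := by
        intro i
        by_cases h : i = j <;> simp [h, Matrix.one_apply, Matrix.add_apply] <;> ring
      rw [Finset.sum_congr rfl fun i _ => this i, Finset.sum_add_distrib, hcol,
        Finset.sum_ite_eq' Finset.univ j (fun _ => 2 * b * D j j + b^2)]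
      simp
      ring
    have key : ∀ (b : ℝ), |b| ≤ a →
        Real.sqrt (∑ i, ((D + b • (1 : Matrix (Fin s) (Fin s) ℝ)) i j)^2) ≤ 1 + c + a := by
      intro b hb
      rw [hsamesum b]
      have hs : Real.sqrt (1+c) ≤ 1 + c := by
        nlinarith [Real.sq_sqrt (by linarith : (0:ℝ) ≤ 1 + c), Real.sqrt_nonneg (1+c),
          Real.sqrt_le_sqrt (by linarith : (1:ℝ) ≤ 1 + c), Real.sqrt_one]
      have hsnn : 0 ≤ Real.sqrt (1+c) := Real.sqrt_nonneg _
      have habs : -a ≤ b ∧ b ≤ a := abs_le.mp hb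
      have h1 : 1 + c + 2*b*D j j + b^2 ≤ (Real.sqrt (1+c) + a)^2 := by
        have hb2 : b^2 ≤ a^2 := sq_le_sq' habs.1 habs.2
        have : b * D j j ≤ a * Real.sqrt (1+c) := by
          calc b * D j j ≤ |b| * D j j := by
                exact mul_le_mul_of_nonneg_right (le_abs_self b) hdnn
            _ ≤ a * Real.sqrt (1+c) := by
                exact mul_le_mul hb hdub hdnn ha0
        nlinarith [Real.sq_sqrt (by linarith : (0:ℝ) ≤ 1 + c)]
      calc Real.sqrt (1 + c + 2*b*D j j + b^2) ≤ Real.sqrt ((Real.sqrt (1+c) + a)^2) :=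
            Real.sqrt_le_sqrt h1
        _ = Real.sqrt (1+c) + a := Real.sqrt_sq (by positivity)
        _ ≤ 1 + c + a := by linarith
    first
      | exact key a (by rw [abs_of_nonneg ha0])
      | { have := key (-a) (by rw [abs_neg, abs_of_nonneg ha0])
          simpa [sub_eq_add_neg, neg_smul] using this }
  }
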